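/- For m = 2, the system of polynomial equations Σᵢ₌₁² Σ_{n₁+2n₂=ℓ} s₃ᵢ² s₁ᵢ^{n₁} s₂ᵢ^{n₂}/(n₁! n₂!) = 0 for ℓ = 1, 2, 3, 4 has no non-trivial solution: any reals s₁ᵢ, s₂ᵢ, s₃ᵢ (i=1,2) with s₃₁ ≠ 0 and s₃₂ ≠ 0 satisfying all four equations must have s₁₁ = s₁₂ = 0. -/
import Mathlib


/-- For `m = 2`, the polynomial system `Σᵢ Σ_{n₁+2n₂=ℓ} s₃ᵢ² s₁ᵢ^{n₁} s₂ᵢ^{n₂}/(n₁!n₂!) = 0`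
for `ℓ = 1, 2, 3, 4` admits no non-trivial solution: any solution with both `s₃ᵢ` nonzero
must have `s₁₁ = s₁₂ = 0`. -/
theorem stmt_8 (s₁₁ s₁₂ s₂₁ s₂₂ s₃₁ s₃₂ : ℝ)
    (h₃₁ : s₃₁ ≠ 0) (h₃₂ : s₃₂ ≠ 0)
    (e1 : s₃₁^2 * s₁₁ + s₃₂^2 * s₁₂ = 0)
    (e2 : s₃₁^2 * (s₁₁^2 / 2 + s₂₁) + s₃₂^2 * (s₁₂^2 / 2 + s₂₂) = 0)
    (e3 : s₃₁^2 * (s₁₁^3 / 6 + s₁₁ * s₂₁) + s₃₂^2 * (s₁₂^3 / 6 + s₁₂ * s₂₂) = 0)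
    (e4 : s₃₁^2 * (s₁₁^4 / 24 + s₁₁^2 * s₂₁ / 2 + s₂₁^2 / 2)
        + s₃₂^2 * (s₁₂^4 / 24 + s₁₂^2 * s₂₂ / 2 + s₂₂^2 / 2) = 0) :
    s₁₁ = 0 ∧ s₁₂ = 0 := by
  set a := s₃₁^2 with ha
  set b := s₃₂^2 with hb
  set x := s₁₁
  set y := s₁₂
  set p := s₂₁
  set q := s₂₂
  -- abbreviations as plain expressions below: A := x^2/2 + p, B := y^2/2 + q
  have k3 : a*(a+b)*(b*x*(x^2/2+p) - x^3*(b-a)/3) = 0 := by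
    linear_combination b^2*e3
      + (a*b*(x^2/2+p) + a^2*x^2 - a*x*(a*x+b*y) + (a*x+b*y)^2/3)*e1
      - b^2*y*e2
  have k4 : a*(a+b)*((b*(x^2/2+p))^2 - x^4*(a^2-a*b+b^2)/6) = 0 := by
    linear_combination 2*b^3*e4
      + (2*a*b^2*(x^2/2+p) - b^2*(a*(x^2/2+p)+b*(y^2/2+q)))*e2
      - ((4*a^3*x^3 - 6*a^2*x^2*(a*x+b*y) + 4*a*x*(a*x+b*y)^2 - (a*x+b*y)^3)/6)*e1
  have big : x^6 * (a*(a+b)*(a^2+a*b+b^2)) = 0 := by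
    linear_combination 18*(b*x*(x^2/2+p) + x^3*(b-a)/3)*k3 - 18*x^2*k4
  have hapos : 0 < a := by positivity
  have hbpos : 0 < b := by positivity
  have hpos : 0 < a*(a+b)*(a^2+a*b+b^2) := by positivity
  have h6 : x^6 = 0 := by
    rcases mul_eq_zero.mp big with h | h
    · exact h
    · exact absurd h hpos.ne'
  have hx : x = 0 := by
    exact pow_eq_zero_iff (n := 6) (by norm_num) |>.mp h6
  have hy : y = 0 := by
    have : b * y = 0 := by rw [hx] at e1; linarith
    exact (mul_eq_zero.mp this).resolve_left hbpos.ne'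
  exact ⟨hx, hy⟩
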